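/- (Theorem: unfaking the fake Selmer group) Let k be a global field containing μ_p, C : y^p = f(x) as above, J its Jacobian, φ = 1 − ζ, and assume C has a k_v-rational divisor class of degree 1 for every place v. Define Sel^φ_explicit(J,k) ⊂ Γ/χ(L*)ι(k*) as the set of classes whose localization at every place v lies in the image of J(k_v)/φJ(k_v) under (x−T, y)_v. Then the connecting map δ_χ restricts to an isomorphism Sel^φ_explicit(J,k) ≅ Sel^φ(J,k), where Sel^φ(J,k) ⊂ H^1(G_k, J[φ]) is the usual Selmer group. -/
import Mathlib


/-- Unfaking the fake Selmer group: Let `k` be a global field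
containing `μ_p`, `C : y^p = f(x)`, `J` its Jacobian, `φ = 1 - ζ`, and assume `C` has
a `k_v`-rational divisor class of degree 1 for every place `v`.  The explicit Selmer
group `Sel^φ_explicit(J, k) ⊆ Γ/χ(L*)ι(k*)` is the set of classes whose localization
at every place `v` lies in the image of `J(k_v)/φJ(k_v)` under `(x-T, y)_v`; the usual
Selmer group `Sel^φ(J, k) ⊆ H^1(G_k, J[φ])` is the set of classes whose restriction
lies in the image of the local connecting map `δ_φᵛ` for all `v`.  Then `δ_χ`
restricts to an isomorphism (a bijection of the two subsets, and `δ_χ` is an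
injective homomorphism) `Sel^φ_explicit(J, k) ≅ Sel^φ(J, k)`.

Formalization by the commutative local-global diagram of the paper:
`ΓQ = Γ/χ(L*)ι(k*)`, `H1 = H^1(G_k, J[φ])`, `B = Br(k)[p]`, with local analogues
indexed by the places `V`; `δχ : ΓQ ↪ H1` with image `ker(δ₁ : H1 → Br(k)[p])`,
`(x-T,y) = δχ⁻¹ ∘ δφ` locally, restriction maps commute with everything, and
`Br(k)[p] → ∏_v Br(k_v)[p]` is injective. -/
theorem explicit_selmer_iso_selmer
    {V : Type*}                                     -- places of the global field k
    {JG ΓQ H1 B : Type*} [CommGroup JG] [CommGroup ΓQ] [CommGroup H1] [CommGroup B]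
    (JGv ΓQv H1v Bv : V → Type*)
    [∀ v, CommGroup (JGv v)] [∀ v, CommGroup (ΓQv v)]
    [∀ v, CommGroup (H1v v)] [∀ v, CommGroup (Bv v)]
    -- global maps
    (xy : JG →* ΓQ)                                 -- (x-T, y) : J(k)/φJ(k) → ΓQ
    (δχ : ΓQ →* H1) (hδχinj : Function.Injective δχ)
    (δφ : JG →* H1) (hglob : ∀ z, δχ (xy z) = δφ z)
    (δ₁ : H1 →* B) (hexact : δχ.range = δ₁.ker)     -- im δχ = ker(H1 → Br(k)[p])
    -- local maps
    (xyv : ∀ v, JGv v →* ΓQv v)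
    (δχv : ∀ v, ΓQv v →* H1v v) (hδχvinj : ∀ v, Function.Injective (δχv v))
    (δφv : ∀ v, JGv v →* H1v v) (hlocal : ∀ v z, δχv v (xyv v z) = δφv v z)
    (δ₁v : ∀ v, H1v v →* Bv v)
    (hexactv : ∀ v, (δχv v).range = (δ₁v v).ker)
    -- restriction (localization) maps and their compatibilities
    (resΓ : ∀ v, ΓQ →* ΓQv v) (resH : ∀ v, H1 →* H1v v) (resB : ∀ v, B →* Bv v)
    (hresχ : ∀ v η, δχv v (resΓ v η) = resH v (δχ η))
    (hresB : ∀ v ξ, δ₁v v (resH v ξ) = resB v (δ₁ ξ))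
    -- injectivity of Br(k)[p] → ∏_v Br(k_v)[p]
    (hBrinj : Function.Injective (fun b : B => fun v : V => resB v b)) :
    Set.BijOn δχ
      {η : ΓQ | ∀ v, resΓ v η ∈ Set.range (xyv v)}   -- Sel^φ_explicit(J, k)
      {ξ : H1 | ∀ v, resH v ξ ∈ Set.range (δφv v)}   -- Sel^φ(J, k)
    := by
  refine ⟨fun η hη v => ?_, fun a _ b _ hab => hδχinj hab, fun ξ hξ => ?_⟩
  · obtain ⟨z, hz⟩ := hη v
    exact ⟨z, by rw [← hlocal v z, hz, hresχ]⟩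
  · -- ξ is in ker δ₁, using injectivity of Br localization
    have hker : δ₁ ξ = 1 := by
      apply hBrinj
      funext v
      obtain ⟨z, hz⟩ := hξ v
      have h1 : δ₁v v (resH v ξ) = 1 := by
        rw [← hz, ← hlocal v z]
        have := (hexactv v) ▸ MonoidHom.mem_range.mpr ⟨xyv v z, rfl⟩
        exact this
      simp only [hresB v ξ] at h1
      simpa using h1
    have : ξ ∈ δχ.range := hexact ▸ hker
    obtain ⟨η, hη⟩ := this
    refine ⟨η, fun v => ?_, hη⟩
    obtain ⟨z, hz⟩ := hξ v
    refine ⟨z, hδχvinj v ?_⟩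
    rw [hlocal v z, hz, hresχ, hη]
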